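/- If NPr_ε(λ) holds, then NPr_{ε+1}(λ⁺) holds. -/

import Mathlib

open FirstOrder Cardinal

attribute [local instance] Classical.propDecidable

section Rank
variable (L : Language) (M : Type) [L.Structure M]

/-- The condition for `rk(w) ≥ 0`: every quantifier-free formula satisfied by an
injective enumeration of `w` admits uncountably many replacements at each coordinate. -/
def RkBase (w : Finset M) : Prop :=
  ∀ (n : ℕ) (v : Fin n → M), Function.Injective v → Set.range v = ↑w →
    ∀ φ : L.Formula (Fin n), φ.IsQF → φ.Realize v →
      ∀ k : Fin n, ¬ ({a : M | φ.Realize (Function.update v k a)}).Countable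

/-- The successor condition for `rk`, relative to a predicate `rk` standing for "rank ≥ β". -/
def RkSuccCond (rk : Finset M → Prop) (w : Finset M) : Prop :=
  ∀ (n : ℕ) (v : Fin n → M), Function.Injective v → Set.range v = ↑w →
    ∀ φ : L.Formula (Fin n), φ.IsQF → φ.Realize v →
      ∀ k : Fin n, ∃ a : M, a ∉ w ∧ rk (insert a w) ∧
        φ.Realize (Function.update v k a)

/-- `RkGe L M w α` says `rk(w, 𝕄) ≥ α`. -/
def RkGe (w : Finset M) (α : Ordinal) : Prop :=
  RkBase L M w ∧ ∀ β : Ordinal, β < α → RkSuccCond L M (fun w' => RkGe w' β) w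
termination_by α

/-- The successor condition for `rk*`: an `ω₁`-sequence of witnesses. -/
def RkStarSuccCond (rk : Finset M → Prop) (w : Finset M) : Prop :=
  ∀ (n : ℕ) (v : Fin n → M), Function.Injective v → Set.range v = ↑w →
    ∀ φ : L.Formula (Fin n), φ.IsQF → φ.Realize v →
      ∀ k : Fin n, ∃ a : Ordinal.{0} → M,
        Set.InjOn a {i : Ordinal.{0} | i < (Cardinal.aleph 1).ord} ∧
        a 0 = v k ∧
        (∀ i : Ordinal.{0}, i < (Cardinal.aleph 1).ord → a i ∉ w.erase (v k)) ∧
        (∀ i : Ordinal.{0}, i < (Cardinal.aleph 1).ord → φ.Realize (Function.update v k (a i))) ∧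
        (∀ i j : Ordinal.{0}, i < j → j < (Cardinal.aleph 1).ord →
          rk (insert (a i) (insert (a j) (w.erase (v k)))))

/-- `RkStarGe L M w α` says `rk*(w, 𝕄) ≥ α`. -/
def RkStarGe (w : Finset M) (α : Ordinal) : Prop :=
  RkBase L M w ∧ ∀ β : Ordinal, β < α → RkStarSuccCond L M (fun w' => RkStarGe w' β) w
termination_by α

end Rank

/-- `NPr ε λ`: there is a model on a universe of size `λ` with countable relational
vocabulary all of whose finite nonempty subsets have rank `< ε`. -/
def NPr (ε : Ordinal) (lam : Cardinal) : Prop :=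
  ∃ (M : Type) (L : FirstOrder.Language.{0,0}) (S : L.Structure M),
    Cardinal.mk M = lam ∧ (∀ n, Countable (L.Relations n)) ∧
    (∀ n, IsEmpty (L.Functions n)) ∧
    ∀ w : Finset M, w.Nonempty → ¬ @RkGe L M S w ε

/-- `NPr* ε λ`, the analogue of `NPr` for the rank `rk*`. -/
def NPrStar (ε : Ordinal) (lam : Cardinal) : Prop :=
  ∃ (M : Type) (L : FirstOrder.Language.{0,0}) (S : L.Structure M),
    Cardinal.mk M = lam ∧ (∀ n, Countable (L.Relations n)) ∧
    (∀ n, IsEmpty (L.Functions n)) ∧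
    ∀ w : Finset M, w.Nonempty → ¬ @RkStarGe L M S w ε

namespace Stmt6Aux
open FirstOrder.Language

def L2 (L : FirstOrder.Language.{0,0}) : FirstOrder.Language.{0,0} where
  Functions := fun _ => Empty
  Relations := fun n => L.Relations (n-1) ⊕ PLift (n = 2)

variable (L : FirstOrder.Language.{0,0}) {M : Type} (S : L.Structure M) (N : Type) [LinearOrder N]
  (g : (γ : N) → {x : N // x < γ} → M)

def S2 : (L2 L).Structure N where
  funMap := fun f => f.elim
  RelMap := fun {n} r x =>
    match r with
    | Sum.inl R => ∃ (hn : 0 < n) (H : ∀ i : Fin (n-1),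
          x ⟨i.1, by omega⟩ < x ⟨n-1, by omega⟩),
        S.RelMap R
          (fun i => g (x ⟨n-1, by omega⟩) ⟨x ⟨i.1, by omega⟩, H i⟩)
    | Sum.inr h => x ⟨0, by have := h.down; omega⟩ < x ⟨1, by have := h.down; omega⟩

variable (hF : ∀ n, IsEmpty (L.Functions n))

def snoc' {β : Type _} {n : ℕ} (b : Fin n → β) (x : β) : Fin (n+1) → β := Fin.snoc b x

@[simp] theorem snoc'_castSucc {β : Type _} {n : ℕ} (b : Fin n → β) (x : β) (i : Fin n) :
    snoc' b x i.castSucc = b i := Fin.snoc_castSucc ..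

@[simp] theorem snoc'_last {β : Type _} {n : ℕ} (b : Fin n → β) (x : β) :
    snoc' b x (Fin.last n) = x := Fin.snoc_last ..

def trTerm {m l : ℕ} : L.Term (Fin m ⊕ Fin l) → (L2 L).Term (Fin (m+1) ⊕ Fin l)
  | Term.var (Sum.inl i) => Term.var (Sum.inl i.castSucc)
  | Term.var (Sum.inr j) => Term.var (Sum.inr j)
  | Term.func f _ => ((hF _).false f).elim

def ltF {m l : ℕ} (i j : Fin (m+1)) : (L2 L).BoundedFormula (Fin (m+1)) l :=
  BoundedFormula.rel (Sum.inr ⟨rfl⟩ : (L2 L).Relations 2)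
    ![Term.var (Sum.inl i), Term.var (Sum.inl j)]

def trBF {m : ℕ} : ∀ {l : ℕ}, L.BoundedFormula (Fin m) l → (L2 L).BoundedFormula (Fin (m+1)) l
  | _, BoundedFormula.falsum => BoundedFormula.falsum
  | _, BoundedFormula.equal t₁ t₂ => BoundedFormula.equal (trTerm L hF t₁) (trTerm L hF t₂)
  | _, BoundedFormula.rel R ts =>
      BoundedFormula.rel (Sum.inl R : (L2 L).Relations (_+1))
        (snoc' (fun i => trTerm L hF (ts i)) (Term.var (Sum.inl (Fin.last m))))
  | _, BoundedFormula.imp f₁ f₂ => BoundedFormula.imp (trBF f₁) (trBF f₂)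
  | _, BoundedFormula.all _ => BoundedFormula.falsum

theorem ltF_isQF {m l : ℕ} (i j : Fin (m+1)) : (ltF L i j : (L2 L).BoundedFormula _ l).IsQF :=
  (BoundedFormula.IsAtomic.rel _ _).isQF

theorem trBF_isQF {m l : ℕ} {φ : L.BoundedFormula (Fin m) l} (h : φ.IsQF) :
    (trBF L hF φ).IsQF := by
  induction h with
  | falsum => exact BoundedFormula.isQF_bot
  | of_isAtomic h =>
    cases h with
    | equal t₁ t₂ => exact (BoundedFormula.IsAtomic.equal _ _).isQF
    | rel R ts => exact (BoundedFormula.IsAtomic.rel _ _).isQF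
  | imp _ _ ih₁ ih₂ => exact ih₁.imp ih₂

theorem foldr_inf_isQF {L' : FirstOrder.Language.{0,0}} {α : Type} {n : ℕ}
    (l : List (L'.BoundedFormula α n)) (h : ∀ φ ∈ l, φ.IsQF) :
    (l.foldr (· ⊓ ·) ⊤).IsQF := by
  induction l with
  | nil => exact BoundedFormula.IsQF.top
  | cons a t ih =>
    exact (h a List.mem_cons_self).inf (ih fun φ hφ => h φ (List.mem_cons_of_mem _ hφ))

include hF in
theorem term_eq_var {m : ℕ} (t : L.Term (Fin m ⊕ Fin 0)) : ∃ i, t = Term.var (Sum.inl i) := by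
  cases t with
  | var s =>
    cases s with
    | inl i => exact ⟨i, rfl⟩
    | inr j => exact j.elim0
  | func f _ => exact ((hF _).false f).elim

theorem g_congr {γ₁ γ₂ : N} (h : γ₁ = γ₂) (x₁ : {x // x < γ₁}) (x₂ : {x // x < γ₂})
    (hx : (x₁ : N) = x₂) : g γ₁ x₁ = g γ₂ x₂ := by
  subst h; cases x₁; cases x₂; simp only at hx; subst hx; rfl

theorem realize_ltF {m l : ℕ} (i j : Fin (m+1)) (v : Fin (m+1) → N) (xs : Fin l → N) :
    @BoundedFormula.Realize (L2 L) N (S2 L S N g) _ _ (ltF L i j) v xs ↔ v i < v j :=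
  Iff.rfl

theorem S2_rel_iff {k : ℕ} (R : L.Relations k) (c : Fin (k+1) → N) :
    @Structure.RelMap (L2 L) N (S2 L S N g) (k+1) (Sum.inl R) c ↔
    (∃ (_ : 0 < k+1) (H' : ∀ i : Fin k, c i.castSucc < c (Fin.last k)),
      S.RelMap R fun i => g (c (Fin.last k)) ⟨c i.castSucc, H' i⟩) := Iff.rfl

theorem S2_rel_snoc {k : ℕ} (R : L.Relations k) (b : Fin k → N) (γ : N) :
    @Structure.RelMap (L2 L) N (S2 L S N g) (k+1) (Sum.inl R) (snoc' b γ) ↔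
      ∃ H : ∀ i, b i < γ, S.RelMap R fun i => g γ ⟨b i, H i⟩ := by
  rw [S2_rel_iff L S N g]
  constructor
  · rintro ⟨-, H', hR⟩
    have H : ∀ i, b i < γ := fun i => by
      have := H' i; rwa [snoc'_castSucc, snoc'_last] at this
    refine ⟨H, ?_⟩
    have : (fun i => g (snoc' b γ (Fin.last k)) ⟨snoc' b γ i.castSucc, H' i⟩)
        = fun i => g γ ⟨b i, H i⟩ := by
      funext i
      exact g_congr N g (snoc'_last b γ) _ _ (snoc'_castSucc b γ i)
    rwa [this] at hR
  · rintro ⟨H, hR⟩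
    have H' : ∀ i : Fin k, snoc' b γ i.castSucc < snoc' b γ (Fin.last k) := fun i => by
      rw [snoc'_castSucc, snoc'_last]; exact H i
    refine ⟨k.succ_pos, H', ?_⟩
    have : (fun i => g (snoc' b γ (Fin.last k)) ⟨snoc' b γ i.castSucc, H' i⟩)
        = fun i => g γ ⟨b i, H i⟩ := by
      funext i
      exact g_congr N g (snoc'_last b γ) _ _ (snoc'_castSucc b γ i)
    rwa [this]

include hF in
theorem realize_trBF {m : ℕ} {φ : L.BoundedFormula (Fin m) 0} (hφ : φ.IsQF)
    (hg : ∀ γ, Function.Injective (g γ)) (γ : N) (v' : Fin (m+1) → N)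
    (hmax : v' (Fin.last m) = γ) (hlt : ∀ i : Fin m, v' i.castSucc < γ)
    (xs : Fin 0 → N) (ys : Fin 0 → M) :
    @BoundedFormula.Realize (L2 L) N (S2 L S N g) _ _ (trBF L hF φ) v' xs ↔
      φ.Realize (fun i => g γ ⟨v' i.castSucc, hlt i⟩) ys := by
  induction hφ with
  | falsum => exact Iff.rfl
  | @of_isAtomic φ h =>
    cases h with
    | equal t₁ t₂ =>
      obtain ⟨i₁, rfl⟩ := term_eq_var L hF t₁
      obtain ⟨i₂, rfl⟩ := term_eq_var L hF t₂
      show v' i₁.castSucc = v' i₂.castSucc ↔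
        g γ ⟨v' i₁.castSucc, hlt i₁⟩ = g γ ⟨v' i₂.castSucc, hlt i₂⟩
      constructor
      · intro h; exact congrArg (g γ) (Subtype.ext h)
      · intro h; exact congrArg Subtype.val (hg γ h)
    | @rel k R ts =>
      have hts : ∀ i, ∃ j, ts i = Term.var (Sum.inl j) := fun i => term_eq_var L hF (ts i)
      choose j hj using hts
      have hargs : (fun i : Fin (k+1) => @Term.realize (L2 L) N (S2 L S N g) _ (Sum.elim v' xs)
          (snoc' (fun i' => trTerm L hF (ts i')) (Term.var (Sum.inl (Fin.last m))) i))
          = snoc' (fun i => v' (j i).castSucc) γ := by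
        funext i
        refine Fin.lastCases ?_ (fun i => ?_) i
        · rw [snoc'_last, snoc'_last]; simp [hmax]
        · rw [snoc'_castSucc, snoc'_castSucc, hj i]; simp [trTerm]
      have key : @BoundedFormula.Realize (L2 L) N (S2 L S N g) _ _
          (trBF L hF (Relations.boundedFormula R ts)) v' xs ↔
          @Structure.RelMap (L2 L) N (S2 L S N g) (k+1) (Sum.inl R)
          (fun i => @Term.realize (L2 L) N (S2 L S N g) _ (Sum.elim v' xs)
            (snoc' (fun i' => trTerm L hF (ts i')) (Term.var (Sum.inl (Fin.last m))) i)) :=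
        Iff.rfl
      rw [key, hargs, S2_rel_snoc L S N g]
      have hRHS : (Relations.boundedFormula R ts).Realize
          (fun i => g γ ⟨v' i.castSucc, hlt i⟩) ys ↔
          S.RelMap R (fun i => g γ ⟨v' (j i).castSucc, hlt (j i)⟩) := by
        show S.RelMap R (fun i => Term.realize _ (ts i)) ↔ _
        have : (fun i => Term.realize (M := M)
            (Sum.elim (fun i => g γ ⟨v' i.castSucc, hlt i⟩) ys) (ts i))
            = fun i => g γ ⟨v' (j i).castSucc, hlt (j i)⟩ := by
          funext i; rw [hj i]; simp [Term.realize]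
        rw [this]
      rw [hRHS]
      exact ⟨fun ⟨H, h⟩ => h, fun h => ⟨fun i => hlt (j i), h⟩⟩
  | @imp φ₁ φ₂ h₁ h₂ ih₁ ih₂ =>
    show (_ → _) ↔ (_ → _)
    exact imp_congr ih₁ ih₂

noncomputable def pushSet (γ : N) (s : Finset N) (hs : ∀ x ∈ s, x < γ) : Finset M :=
  s.attach.image fun x => g γ ⟨x.1, hs x.1 x.2⟩

theorem mem_pushSet {γ : N} {s : Finset N} {hs : ∀ x ∈ s, x < γ} {b : M} :
    b ∈ pushSet N g γ s hs ↔ ∃ (x : N) (hx : x ∈ s), g γ ⟨x, hs x hx⟩ = b := by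
  constructor
  · intro h
    obtain ⟨⟨x, hx⟩, -, rfl⟩ := Finset.mem_image.mp h
    exact ⟨x, hx, rfl⟩
  · rintro ⟨x, hx, rfl⟩
    exact Finset.mem_image.mpr ⟨⟨x, hx⟩, Finset.mem_attach _ _, rfl⟩

theorem pushSet_insert {γ a : N} {s : Finset N} (ha : a < γ)
    (hs : ∀ x ∈ s, x < γ) (hs' : ∀ x ∈ insert a s, x < γ) :
    pushSet N g γ (insert a s) hs' = insert (g γ ⟨a, ha⟩) (pushSet N g γ s hs) := by
  ext b
  rw [mem_pushSet, Finset.mem_insert, mem_pushSet]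
  constructor
  · rintro ⟨x, hx, rfl⟩
    rcases Finset.mem_insert.mp hx with rfl | hx'
    · exact Or.inl rfl
    · exact Or.inr ⟨x, hx', rfl⟩
  · rintro (rfl | ⟨x, hx, rfl⟩)
    · exact ⟨a, Finset.mem_insert_self a s, rfl⟩
    · exact ⟨x, Finset.mem_insert_of_mem hx, rfl⟩

theorem pushSet_nonempty {γ : N} {s : Finset N} (hs : ∀ x ∈ s, x < γ) (h : s.Nonempty) :
    (pushSet N g γ s hs).Nonempty := by
  obtain ⟨x, hx⟩ := h
  exact ⟨g γ ⟨x, hs x hx⟩, mem_pushSet N g |>.mpr ⟨x, hx, rfl⟩⟩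

end Stmt6Aux

namespace Stmt6Aux
open FirstOrder.Language

variable (L : FirstOrder.Language.{0,0}) {M : Type} (S : L.Structure M) (N : Type) [LinearOrder N]
  (g : (γ : N) → {x : N // x < γ} → M) (hF : ∀ n, IsEmpty (L.Functions n))

include hF in
theorem transfer (hg : ∀ γ, Function.Injective (g γ)) (β : Ordinal) :
    ∀ (γ : N) (s : Finset N) (hs : ∀ x ∈ s, x < γ), s.Nonempty →
    @RkGe (L2 L) N (S2 L S N g) (insert γ s) β → @RkGe L M S (pushSet N g γ s hs) β := by
  letI : (L2 L).Structure N := S2 L S N g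
  induction β using Ordinal.induction with
  | h β IH =>
    intro γ s hs hsne hN
    rw [RkGe] at hN
    obtain ⟨hbase, hsucc⟩ := hN
    rw [RkGe]
    have main : ∀ (n : ℕ) (v : Fin n → M), Function.Injective v →
        Set.range v = ↑(pushSet N g γ s hs) →
        ∀ ψ : L.Formula (Fin n), ψ.IsQF → ψ.Realize v → ∀ k : Fin n,
        (¬ ({b : M | ψ.Realize (Function.update v k b)}).Countable) ∧
        (∀ β' : Ordinal, β' < β → ∃ b : M, b ∉ pushSet N g γ s hs ∧
          @RkGe L M S (insert b (pushSet N g γ s hs)) β' ∧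
          ψ.Realize (Function.update v k b)) := by
      intro n v hv hrange ψ hψ hψv k
      have hmem : ∀ i, v i ∈ pushSet N g γ s hs := fun i => by
        rw [← Finset.mem_coe, ← hrange]; exact Set.mem_range_self i
      have hpre : ∀ i : Fin n, ∃ (x : N) (hx : x ∈ s), g γ ⟨x, hs x hx⟩ = v i :=
        fun i => (mem_pushSet N g).mp (hmem i)
      choose b hb hgb using hpre
      have hblt : ∀ i, b i < γ := fun i => hs _ (hb i)
      set v' : Fin (n+1) → N := snoc' b γ with hv'def
      have hv'last : v' (Fin.last n) = γ := snoc'_last b γ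
      have hv'cs : ∀ i, v' i.castSucc = b i := snoc'_castSucc b γ
      have hbinj : Function.Injective b := by
        intro i i' hii
        apply hv
        rw [← hgb i, ← hgb i']
        exact g_congr N g rfl _ _ hii
      have hv'inj : Function.Injective v' := by
        intro x y hxy
        rcases Fin.eq_castSucc_or_eq_last x with ⟨x', rfl⟩ | rfl <;>
          rcases Fin.eq_castSucc_or_eq_last y with ⟨y', rfl⟩ | rfl
        · rw [hv'cs, hv'cs] at hxy; rw [hbinj hxy]
        · rw [hv'cs, hv'last] at hxy; exact absurd hxy (hblt x').ne
        · rw [hv'cs, hv'last] at hxy; exact absurd hxy.symm (hblt y').ne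
        · rfl
      have hv'range : Set.range v' = ↑(insert γ s) := by
        ext x
        simp only [Set.mem_range, Finset.coe_insert, Set.mem_insert_iff, Finset.mem_coe]
        constructor
        · rintro ⟨i, rfl⟩
          rcases Fin.eq_castSucc_or_eq_last i with ⟨i', rfl⟩ | rfl
          · rw [hv'cs]; exact Or.inr (hb i')
          · rw [hv'last]; exact Or.inl rfl
        · rintro (rfl | hxs)
          · exact ⟨Fin.last n, hv'last⟩
          · have : g γ ⟨x, hs x hxs⟩ ∈ Set.range v := by
              rw [hrange]; exact Finset.mem_coe.mpr ((mem_pushSet N g).mpr ⟨x, hxs, rfl⟩)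
            obtain ⟨i, hi⟩ := this
            refine ⟨i.castSucc, ?_⟩
            rw [hv'cs]
            exact congrArg Subtype.val (hg γ ((hgb i).trans hi))
      set φ' : (L2 L).Formula (Fin (n+1)) :=
        trBF L hF ψ ⊓ (List.ofFn (fun i : Fin n => ltF L i.castSucc (Fin.last n))).foldr (· ⊓ ·) ⊤
        with hφ'def
      have hφ'QF : φ'.IsQF := (trBF_isQF L hF hψ).inf (foldr_inf_isQF _ (by
        intro χ hχ
        rw [List.mem_ofFn] at hχ
        obtain ⟨i, rfl⟩ := hχ
        exact ltF_isQF L _ _))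
      have hφ'real : ∀ (v'' : Fin (n+1) → N), v'' (Fin.last n) = γ →
          ((@Formula.Realize (L2 L) N (S2 L S N g) _ φ' v'') ↔
            ∃ hl : ∀ i : Fin n, v'' i.castSucc < γ,
              ψ.Realize (fun i => g γ ⟨v'' i.castSucc, hl i⟩)) := by
        intro v'' h2
        show @BoundedFormula.Realize (L2 L) N (S2 L S N g) _ _ φ' v'' default ↔ _
        rw [hφ'def]
        rw [BoundedFormula.realize_inf, BoundedFormula.realize_foldr_inf]
        constructor
        · rintro ⟨h1, hconj⟩
          have hl : ∀ i : Fin n, v'' i.castSucc < γ := by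
            intro i
            have := hconj (ltF L i.castSucc (Fin.last n))
              (by rw [List.mem_ofFn]; exact ⟨i, rfl⟩)
            rw [realize_ltF L S N g, h2] at this
            exact this
          exact ⟨hl, (realize_trBF L S N g hF hψ hg γ v'' h2 hl default default).mp h1⟩
        · rintro ⟨hl, hr⟩
          refine ⟨(realize_trBF L S N g hF hψ hg γ v'' h2 hl default default).mpr hr, ?_⟩
          intro χ hχ
          rw [List.mem_ofFn] at hχ
          obtain ⟨i, rfl⟩ := hχ
          rw [realize_ltF L S N g, h2]
          exact hl i
      have hupd : ∀ a : N,
          @Formula.Realize (L2 L) N (S2 L S N g) _ φ' (Function.update v' k.castSucc a) →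
          ∃ ha : a < γ, ψ.Realize (Function.update v k (g γ ⟨a, ha⟩)) := by
        intro a hra
        have h2 : Function.update v' k.castSucc a (Fin.last n) = γ := by
          rw [Function.update_of_ne (Fin.castSucc_lt_last k).ne', hv'last]
        obtain ⟨hl, hr⟩ := (hφ'real _ h2).mp hra
        have ha : a < γ := by
          have := hl k
          rwa [Function.update_self] at this
        refine ⟨ha, ?_⟩
        have hfun : (fun i => g γ ⟨Function.update v' k.castSucc a i.castSucc, hl i⟩)
            = Function.update v k (g γ ⟨a, ha⟩) := by
          funext i
          by_cases hik : i = k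
          · subst hik
            conv_rhs => rw [Function.update_self]
            exact g_congr N g rfl _ _ (Function.update_self _ _ _)
          · have hne : i.castSucc ≠ k.castSucc := fun hcc => hik (Fin.castSucc_injective n hcc)
            exact (g_congr N g rfl _ _ (by
              show Function.update v' k.castSucc a i.castSucc = b i
              rw [Function.update_of_ne hne, hv'cs])).trans
              ((hgb i).trans (Function.update_of_ne hik (g γ ⟨a, ha⟩) v).symm)
        rw [hfun] at hr
        exact hr
      have hEq : ∀ (hl : ∀ i : Fin n, v' i.castSucc < γ),
          (fun i => g γ ⟨v' i.castSucc, hl i⟩) = v := fun hl => funext fun i => by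
        rw [← hgb i]; exact g_congr N g rfl _ _ (hv'cs i)
      have hreal' : @Formula.Realize (L2 L) N (S2 L S N g) _ φ' v' := by
        refine (hφ'real v' hv'last).mpr ⟨fun i => by rw [hv'cs]; exact hblt i, ?_⟩
        rw [hEq]; exact hψv
      constructor
      · have hnc := hbase (n+1) v' hv'inj hv'range φ' hφ'QF hreal' k.castSucc
        intro hcnt
        apply hnc
        haveI : Countable ↥{b : M | ψ.Realize (Function.update v k b)} := hcnt.to_subtype
        let F : ↥{a : N | @Formula.Realize (L2 L) N (S2 L S N g) _ φ'
              (Function.update v' k.castSucc a)} →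
            ↥{b : M | ψ.Realize (Function.update v k b)} :=
          fun a => ⟨g γ ⟨a.1, (hupd a.1 a.2).choose⟩, (hupd a.1 a.2).choose_spec⟩
        have hFinj : Function.Injective F := by
          intro a a' hFa
          have h1 : g γ ⟨a.1, (hupd a.1 a.2).choose⟩ = g γ ⟨a'.1, (hupd a'.1 a'.2).choose⟩ :=
            congrArg Subtype.val hFa
          exact Subtype.ext (Subtype.mk_eq_mk.mp (hg γ h1))
        exact Set.countable_coe_iff.mp hFinj.countable
      · intro β' hβ'
        obtain ⟨a, hanot, harkge, hareal⟩ :=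
          hsucc β' hβ' (n+1) v' hv'inj hv'range φ' hφ'QF hreal' k.castSucc
        obtain ⟨haγ, hψa⟩ := hupd a hareal
        have hanins : a ∉ s := fun hxs => hanot (Finset.mem_insert_of_mem hxs)
        refine ⟨g γ ⟨a, haγ⟩, ?_, ?_, hψa⟩
        · intro hmem'
          obtain ⟨x, hx, hgx⟩ := (mem_pushSet N g).mp hmem'
          exact hanins ((Subtype.mk_eq_mk.mp (hg γ hgx)) ▸ hx)
        · have hs' : ∀ x ∈ insert a s, x < γ := by
            intro x hx
            rcases Finset.mem_insert.mp hx with rfl | hx'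
            · exact haγ
            · exact hs x hx'
          have hrk2 : @RkGe (L2 L) N (S2 L S N g) (insert γ (insert a s)) β' := by
            rwa [Finset.insert_comm] at harkge
          have hres := IH β' hβ' γ (insert a s) hs' ⟨a, Finset.mem_insert_self a s⟩ hrk2
          rwa [pushSet_insert N g haγ hs hs'] at hres
    constructor
    · intro n v hv hr ψ hψ hψv k
      exact (main n v hv hr ψ hψ hψv k).1
    · intro β' hβ' n v hv hr ψ hψ hψv k
      exact (main n v hv hr ψ hψ hψv k).2 β' hβ'

end Stmt6Aux

/-- If NPr_ε(λ) then NPr_{ε+1}(λ⁺). -/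
theorem stmt_6 (ε : Ordinal) (lam : Cardinal) (h : NPr ε lam) :
    NPr (ε + 1) (Order.succ lam) := by
  obtain ⟨M, L, S, hM, hRel, hFun, hrk⟩ := h
  let N : Type := (Order.succ lam).ord.ToType
  haveI : IsWellOrder N (· < ·) :=
    isWellOrder_lt
  have hmkN : #N = Order.succ lam := by
    exact Cardinal.mk_ord_toType _
  have hgi : ∀ γ : N, ∃ f : {x : N // x < γ} → M, Function.Injective f := by
    intro γ
    have h1 : #{x : N // x < γ} < Order.succ lam := by
      have h2 := Cardinal.card_typein_toType_lt (Order.succ lam) γ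
      have h3 : #{x : N // x < γ} =
          (Ordinal.typein (α := (Order.succ lam).ord.ToType) (· < ·) γ).card :=
        Ordinal.card_typein γ
      rw [h3]; exact h2
    have h4 : #{x : N // x < γ} ≤ #M := by
      rw [hM]; exact Order.lt_succ_iff.mp h1
    rw [Cardinal.le_def] at h4
    obtain ⟨f⟩ := h4
    exact ⟨f, f.injective⟩
  choose g hg using hgi
  refine ⟨N, Stmt6Aux.L2 L, Stmt6Aux.S2 L S N g, hmkN, ?_, ?_, ?_⟩
  · intro n
    haveI := hRel (n-1)
    show Countable (L.Relations (n-1) ⊕ PLift (n = 2))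
    infer_instance
  · intro n
    exact ⟨fun f => f.elim⟩
  · intro w hw hRk
    letI : (Stmt6Aux.L2 L).Structure N := Stmt6Aux.S2 L S N g
    rw [RkGe] at hRk
    obtain ⟨hbase, hsucc⟩ := hRk
    have hε : ε < ε + 1 := by
      rw [Ordinal.add_one_eq_succ]
      exact Order.lt_succ ε
    have hcard : 0 < w.card := Finset.card_pos.mpr hw
    let e := w.orderIsoOfFin rfl
    let v : Fin w.card → N := fun i => (e i : N)
    have hvinj : Function.Injective v := fun i j hij => e.injective (Subtype.ext hij)
    have hvrange : Set.range v = ↑w := by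
      ext x
      constructor
      · rintro ⟨i, rfl⟩; exact (e i).2
      · intro hx
        obtain ⟨i, hi⟩ := e.surjective ⟨x, hx⟩
        exact ⟨i, by rw [show v i = ((e i : ↥w) : N) from rfl, hi]⟩
    obtain ⟨a, hanot, hge, -⟩ := hsucc ε hε w.card v hvinj hvrange ⊤
      FirstOrder.Language.BoundedFormula.IsQF.top
      (FirstOrder.Language.Formula.realize_top.mpr trivial) ⟨0, hcard⟩
    have hane : (insert a w).Nonempty := ⟨a, Finset.mem_insert_self a w⟩
    set γ := (insert a w).max' hane with hγdef
    have hγmem : γ ∈ insert a w := Finset.max'_mem _ hane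
    set s := (insert a w).erase γ with hsdef
    have hins : insert γ s = insert a w := Finset.insert_erase hγmem
    have hs : ∀ x ∈ s, x < γ := fun x hx =>
      lt_of_le_of_ne (Finset.le_max' _ _ (Finset.mem_of_mem_erase hx)) (Finset.ne_of_mem_erase hx)
    have hsne : s.Nonempty := by
      rw [← Finset.card_pos, Finset.card_erase_of_mem hγmem, Finset.card_insert_of_notMem hanot]
      omega
    have htr := Stmt6Aux.transfer L S N g hFun hg ε γ s hs hsne (by rw [hins]; exact hge)
    exact hrk _ (Stmt6Aux.pushSet_nonempty N g hs hsne) htr
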